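/- No finite-index subgroup of SL₃(ℤ) is left-orderable. -/

import Mathlib

variable {G : Type*} [Group G]

lemma flip0 {a b z : G} {k : ℤ} (h : a*b = b*a*z^k) : b*a = a*b*z^(-k) := by
  rw [h]; group

lemma flip1 {a b z : G} {k : ℤ} (hza : Commute z a) (h : a*b = b*a*z^k) :
    a⁻¹*b = b*a⁻¹*z^(-k) := by
  apply mul_left_cancel (a := a)
  have hc : (z^k)⁻¹ * a⁻¹ = a⁻¹ * (z^k)⁻¹ := ((hza.zpow_left k).inv_right.inv_left).eq
  calc a * (a⁻¹ * b) = b := by group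
    _ = b * a * z^k * ((z^k)⁻¹ * a⁻¹) := by group
    _ = b * a * z^k * (a⁻¹ * (z^k)⁻¹) := by rw [hc]
    _ = (a * b) * (a⁻¹ * (z^k)⁻¹) := by rw [← h]
    _ = a * (b * a⁻¹ * z^(-k)) := by group

lemma flip2 {a b z : G} {k : ℤ} (hzb : Commute z b) (h : a*b = b*a*z^k) :
    a*b⁻¹ = b⁻¹*a*z^(-k) := by
  apply mul_left_cancel (a := b)
  have hc : z^(-k) * b⁻¹ = b⁻¹ * z^(-k) := ((hzb.zpow_left (-k)).inv_right).eq
  calc b * (a * b⁻¹) = (b*a) * b⁻¹ := by group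
    _ = a*b*z^(-k) * b⁻¹ := by rw [flip0 h]
    _ = a*b * (z^(-k) * b⁻¹) := by group
    _ = a*b * (b⁻¹ * z^(-k)) := by rw [hc]
    _ = b * (b⁻¹ * a * z^(-k)) := by group

lemma flip3 {a b z : G} {k : ℤ} (h : a*b = b*a*z^k) : a*b = b*a*(z⁻¹)^(-k) := by
  simpa using h

lemma relStable {a b z : G} (hza : Commute z a) (hzb : Commute z b)
    (h : ∃ k : ℤ, k ≠ 0 ∧ a*b = b*a*z^k) (a' b' z' : G)
    (ha' : a' = a ∨ a' = a⁻¹) (hb' : b' = b ∨ b' = b⁻¹) (hz' : z' = z ∨ z' = z⁻¹) :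
    ∃ k : ℤ, k ≠ 0 ∧ a'*b' = b'*a'*z'^k := by
  obtain ⟨k, hk, h⟩ := h
  have h1 : ∃ k : ℤ, k ≠ 0 ∧ a'*b = b*a'*z^k := by
    rcases ha' with rfl | rfl
    · exact ⟨k, hk, h⟩
    · exact ⟨-k, by simpa using hk, flip1 hza h⟩
  obtain ⟨k1, hk1, h1⟩ := h1
  have h2 : ∃ k : ℤ, k ≠ 0 ∧ a'*b' = b'*a'*z^k := by
    rcases hb' with rfl | rfl
    · exact ⟨k1, hk1, h1⟩
    · exact ⟨-k1, by simpa using hk1, flip2 hzb h1⟩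
  obtain ⟨k2, hk2, h2⟩ := h2
  rcases hz' with rfl | rfl
  · exact ⟨k2, hk2, h2⟩
  · exact ⟨-k2, by simpa using hk2, flip3 h2⟩

/-- local non-strict order -/
def LE' (lt : G → G → Prop) (x y : G) : Prop := lt x y ∨ x = y

section Core

variable (lt : G → G → Prop)

lemma le'_trans (htr : ∀ {x y z : G}, lt x y → lt y z → lt x z)
    {x y z : G} (h1 : LE' lt x y) (h2 : LE' lt y z) : LE' lt x z := by
  rcases h1 with h1 | rfl
  · rcases h2 with h2 | rfl
    · exact Or.inl (htr h1 h2)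
    · exact Or.inl h1
  · exact h2

lemma le'_mul (hinv : ∀ g x y : G, lt x y → lt (g*x) (g*y))
    {g x y : G} (h : LE' lt x y) : LE' lt (g*x) (g*y) := by
  rcases h with h | rfl
  · exact Or.inl (hinv g x y h)
  · exact Or.inr rfl

lemma not_lt_and_le' (hirr : ∀ x : G, ¬ lt x x)
    (htr : ∀ {x y z : G}, lt x y → lt y z → lt x z)
    {x y : G} (h1 : lt x y) (h2 : LE' lt y x) : False := by
  rcases h2 with h2 | rfl
  · exact hirr _ (htr h1 h2)
  · exact hirr _ h1

lemma onelt_pow (htr : ∀ {x y z : G}, lt x y → lt y z → lt x z)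
    (hinv : ∀ g x y : G, lt x y → lt (g*x) (g*y))
    {x : G} (h : lt 1 x) : ∀ n : ℕ, 0 < n → lt 1 (x^n) := by
  intro n hn
  induction n with
  | zero => omega
  | succ m ih =>
    rcases Nat.eq_zero_or_pos m with hm | hm
    · subst hm; simpa using h
    · have h2 : lt (x^m) (x^m * x) := by simpa using hinv (x^m) 1 x h
      rw [pow_succ]
      exact htr (ih hm) h2

lemma pow_lt_pow' (htr : ∀ {x y z : G}, lt x y → lt y z → lt x z)
    (hinv : ∀ g x y : G, lt x y → lt (g*x) (g*y))
    {x : G} (h : lt 1 x) {s t : ℕ} (hst : s < t) : lt (x^s) (x^t) := by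
  have h1 : lt 1 (x^(t-s)) := onelt_pow lt @htr hinv h _ (by omega)
  have h2 := hinv (x^s) 1 (x^(t-s)) h1
  rw [mul_one, ← pow_add] at h2
  have hts : s + (t - s) = t := by omega
  rwa [hts] at h2

end Core

/-- commutator power identity in Heisenberg-like setting -/
lemma heis_pow {a b z : G} (hza : Commute z a) (hzb : Commute z b)
    {m : ℕ} (hrel : a*b = b*a*z^m) :
    ∀ i j : ℕ, a^i * b^j = b^j * a^i * z^(m*i*j) := by
  have hrow : ∀ i : ℕ, a^i * b = b * a^i * z^(m*i) := by
    intro i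
    induction i with
    | zero => simp
    | succ i ih =>
      have hexp : m*(i+1) = m + m*i := by ring
      calc a^(i+1) * b = a * (a^i * b) := by rw [pow_succ']; group
        _ = a * (b * a^i * z^(m*i)) := by rw [ih]
        _ = (a*b) * (a^i * z^(m*i)) := by group
        _ = (b*a*z^m) * (a^i * z^(m*i)) := by rw [hrel]
        _ = b*a*(z^m * a^i) * z^(m*i) := by group
        _ = b*a*(a^i * z^m) * z^(m*i) := by rw [(hza.pow_pow m i).eq]
        _ = b * (a * a^i) * (z^m * z^(m*i)) := by group
        _ = b * a^(i+1) * z^(m*(i+1)) := by rw [← pow_succ', ← pow_add, hexp]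
  intro i j
  induction j with
  | zero => simp
  | succ j ih =>
    have hexp : m*i*(j+1) = m*i + m*i*j := by ring
    calc a^i * b^(j+1) = (a^i * b^j) * b := by rw [pow_succ, ← mul_assoc]
      _ = (b^j * a^i * z^(m*i*j)) * b := by rw [ih]
      _ = b^j * a^i * (z^(m*i*j) * b) := by group
      _ = b^j * a^i * (b * z^(m*i*j)) := by rw [(hzb.pow_left (m*i*j)).eq]
      _ = b^j * (a^i * b) * z^(m*i*j) := by group
      _ = b^j * (b * a^i * z^(m*i)) * z^(m*i*j) := by rw [hrow i]
      _ = (b^j * b) * a^i * (z^(m*i) * z^(m*i*j)) := by group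
      _ = b^(j+1) * a^i * z^(m*i*(j+1)) := by rw [← pow_succ, ← pow_add, hexp]

/-- Key lemma: in a left-ordered group, the "commutator" z of a Heisenberg triple is
infinitesimal with respect to a or b. -/
lemma lemA (lt : G → G → Prop)
    (htri : ∀ x y : G, lt x y ∨ x = y ∨ lt y x)
    (hirr : ∀ x : G, ¬ lt x x)
    (htr : ∀ {x y z : G}, lt x y → lt y z → lt x z)
    (hinv : ∀ g x y : G, lt x y → lt (g*x) (g*y))
    {a b z : G} (hza : Commute z a) (hzb : Commute z b)
    {m : ℕ} (hm : 0 < m) (hrel : a*b = b*a*z^m)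
    (ha : lt 1 a) (hb : lt 1 b) (hz : lt 1 z) :
    (∀ n : ℕ, lt (z^n) a) ∨ (∀ n : ℕ, lt (z^n) b) := by
  by_contra hcon
  push_neg at hcon
  obtain ⟨⟨p, hp⟩, ⟨q, hq⟩⟩ := hcon
  have lea : LE' lt a (z^p) := by
    rcases htri (z^p) a with h | h | h
    exacts [absurd h hp, Or.inr h.symm, Or.inl h]
  have leb : LE' lt b (z^q) := by
    rcases htri (z^q) b with h | h | h
    exacts [absurd h hq, Or.inr h.symm, Or.inl h]
  have hbound : ∀ (x : G) (s : ℕ), Commute z x → LE' lt x (z^s) →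
      ∀ n : ℕ, LE' lt (x^n) (z^(s*n)) := by
    intro x s hzx hx n
    induction n with
    | zero => simp [LE']
    | succ n ih =>
      have h1 : LE' lt (x^(n+1)) (x^n * z^s) := by
        rw [pow_succ]; exact le'_mul lt hinv hx
      have h2 : x^n * z^s = z^s * x^n := ((hzx.pow_pow s n).eq).symm
      have h3 : LE' lt (z^s * x^n) (z^s * z^(s*n)) := le'_mul lt hinv ih
      have h4 : z^s * z^(s*n) = z^(s*(n+1)) := by rw [← pow_add]; ring_nf
      rw [h2] at h1
      rw [h4] at h3
      exact le'_trans lt @htr h1 h3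
  set n : ℕ := p + q + 1 with hn
  have hA : LE' lt (a^n) (z^(p*n)) := hbound a p hza lea n
  have hB : LE' lt (b^n) (z^(q*n)) := hbound b q hzb leb n
  have h1 : LE' lt (a^n * b^n) (a^n * z^(q*n)) := le'_mul lt hinv hB
  have h2 : a^n * z^(q*n) = z^(q*n) * a^n := ((hza.pow_pow (q*n) n).eq).symm
  have h3 : LE' lt (z^(q*n) * a^n) (z^(q*n) * z^(p*n)) := le'_mul lt hinv hA
  have h4 : z^(q*n) * z^(p*n) = z^((p+q)*n) := by rw [← pow_add]; ring_nf
  have hUB : LE' lt (a^n * b^n) (z^((p+q)*n)) := by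
    rw [h2] at h1; rw [h4] at h3; exact le'_trans lt @htr h1 h3
  have hid : a^n * b^n = b^n * a^n * z^(m*n*n) := heis_pow hza hzb hrel n n
  have hccc : Commute (z^(m*n*n)) (b^n * a^n) :=
    ((hzb.pow_pow (m*n*n) n).mul_right (hza.pow_pow (m*n*n) n))
  have hz1 : a^n * b^n = z^(m*n*n) * (b^n * a^n) := by
    rw [hid, ← hccc.eq]
  have e1 : lt 1 (b^n) := onelt_pow lt @htr hinv hb n (by omega)
  have e2 : lt (b^n) (b^n * a^n) := by
    simpa using hinv (b^n) 1 (a^n) (onelt_pow lt @htr hinv ha n (by omega))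
  have e4 : lt (z^(m*n*n) * 1) (z^(m*n*n) * (b^n * a^n)) := hinv _ _ _ (htr e1 e2)
  rw [mul_one, ← hz1] at e4
  have hlow : LE' lt (z^(m*n*n)) (z^((p+q)*n)) :=
    le'_trans lt @htr (Or.inl e4) hUB
  have hstrict : lt (z^((p+q)*n)) (z^(m*n*n)) := by
    apply pow_lt_pow' lt @htr hinv hz
    have hpq : p + q < n := by omega
    calc (p+q)*n < n*n := by
          have hnpos : 0 < n := by omega
          exact (Nat.mul_lt_mul_right hnpos).mpr hpq
      _ ≤ m*n*n := by nlinarith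
  exact not_lt_and_le' lt hirr @htr hstrict hlow

lemma commStable {x y x' y' : G} (h : Commute x y)
    (hx : x' = x ∨ x' = x⁻¹) (hy : y' = y ∨ y' = y⁻¹) : Commute x' y' := by
  rcases hx with rfl | rfl <;> rcases hy with rfl | rfl
  exacts [h, h.inv_right, h.inv_left, h.inv_left.inv_right]

theorem hexagon (lt : G → G → Prop)
    (htri : ∀ x y : G, lt x y ∨ x = y ∨ lt y x)
    (hirr : ∀ x : G, ¬ lt x x)
    (htr : ∀ {x y z : G}, lt x y → lt y z → lt x z)
    (hinv : ∀ g x y : G, lt x y → lt (g*x) (g*y))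
    (u : Fin 6 → G)
    (hne : ∀ i, u i ≠ 1)
    (hcomm : ∀ i, Commute (u i) (u (i+1)))
    (hrel : ∀ i, ∃ k : ℤ, k ≠ 0 ∧ u i * u (i+2) = u (i+2) * u i * (u (i+1))^k) :
    False := by
  classical
  have ea : ∀ w : Fin 6, w - 1 + 1 = w := by decide
  have eb : ∀ w : Fin 6, w - 1 + 2 = w + 1 := by decide
  have ec : ∀ w : Fin 6, w + 1 + 1 = w + 2 := by decide
  set v : Fin 6 → G := fun i => if lt 1 (u i) then u i else (u i)⁻¹ with hvdef
  have hvform : ∀ i, v i = u i ∨ v i = (u i)⁻¹ := by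
    intro i; by_cases h : lt 1 (u i) <;> simp [hvdef, h]
  have hvpos : ∀ i, lt 1 (v i) := by
    intro i
    by_cases h : lt 1 (u i)
    · simpa [hvdef, h] using h
    · have h1 : lt (u i) 1 := by
        rcases htri 1 (u i) with h' | h' | h'
        exacts [absurd h' h, absurd h'.symm (hne i), h']
      have h2 := hinv (u i)⁻¹ (u i) 1 h1
      simp only [inv_mul_cancel, mul_one] at h2
      simpa [hvdef, h] using h2
  -- commutation facts for u with middle shifted
  have hcomm' : ∀ w : Fin 6, Commute (u w) (u (w-1)) := by
    intro w
    have := (hcomm (w-1)).symm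
    rwa [ea w] at this
  -- the v-relations, centered at w
  have hvrel : ∀ w : Fin 6, ∃ k : ℤ, k ≠ 0 ∧
      v (w-1) * v (w+1) = v (w+1) * v (w-1) * (v w)^k := by
    intro w
    have h0 := hrel (w-1)
    rw [ea w, eb w] at h0
    exact relStable (hcomm' w) (hcomm w) h0 _ _ _ (hvform (w-1)) (hvform (w+1)) (hvform w)
  have hvza : ∀ w : Fin 6, Commute (v w) (v (w-1)) :=
    fun w => commStable (hcomm' w) (hvform w) (hvform (w-1))
  have hvzb : ∀ w : Fin 6, Commute (v w) (v (w+1)) :=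
    fun w => commStable (hcomm w) (hvform w) (hvform (w+1))
  -- domination
  have hDis : ∀ w : Fin 6, (∀ n : ℕ, lt ((v w)^n) (v (w-1))) ∨
      (∀ n : ℕ, lt ((v w)^n) (v (w+1))) := by
    intro w
    obtain ⟨k, hk, hr⟩ := hvrel w
    rcases lt_trichotomy k 0 with hkneg | rfl | hkpos
    · have hr' := flip0 hr
      have hkk : -k = ((-k).toNat : ℤ) := (Int.toNat_of_nonneg (by omega)).symm
      rw [hkk, zpow_natCast] at hr'
      have := lemA lt htri hirr @htr hinv (hvzb w) (hvza w)
        (m := (-k).toNat) (by omega) hr' (hvpos (w+1)) (hvpos (w-1)) (hvpos w)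
      exact this.symm
    · exact absurd rfl hk
    · have hkk : k = (k.toNat : ℤ) := (Int.toNat_of_nonneg (by omega)).symm
      rw [hkk, zpow_natCast] at hr
      exact lemA lt htri hirr @htr hinv (hvza w) (hvzb w)
        (m := k.toNat) (by omega) hr (hvpos (w-1)) (hvpos (w+1)) (hvpos w)
  have hch : ∀ w : Fin 6, ∃ j, ∀ n : ℕ, lt ((v w)^n) (v j) := by
    intro w
    rcases hDis w with h | h
    exacts [⟨w-1, h⟩, ⟨w+1, h⟩]
  choose f hf using hch
  have hiter : ∀ (t : ℕ) (w : Fin 6) (n : ℕ), lt ((v w)^n) (v (f^[t+1] w)) := by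
    intro t
    induction t with
    | zero => intro w n; simpa using hf w n
    | succ t ih =>
      intro w n
      have h1 := ih w n
      have h2 := hf (f^[t+1] w) 1
      rw [pow_one] at h2
      rw [Function.iterate_succ_apply']
      exact htr h1 h2
  have main : ∀ s t : ℕ, s < t → f^[s] 0 = f^[t] 0 → False := by
    intro s t hst he
    have ht : t = (t - s - 1) + 1 + s := by omega
    rw [ht, Function.iterate_add_apply] at he
    have h1 := hiter (t - s - 1) (f^[s] 0) 1
    rw [pow_one, ← he] at h1
    exact hirr _ h1
  have hpig := Fintype.exists_ne_map_eq_of_card_lt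
    (fun t : Fin 7 => (f^[(t : ℕ)] (0 : Fin 6))) (by simp)
  obtain ⟨s, t, hst, he⟩ := hpig
  have hst' : (s : ℕ) ≠ (t : ℕ) := fun h => hst (Fin.ext h)
  rcases Nat.lt_or_ge (s : ℕ) (t : ℕ) with h | h
  · exact main _ _ h he
  · exact main _ _ (by omega) he.symm

open Matrix

lemma Mcomm' {i j k l : Fin 3} (hjk : j ≠ k) (hli : l ≠ i) (a b : ℤ) :
    transvection i j a * transvection k l b = transvection k l b * transvection i j a := by
  simp [transvection, Matrix.add_mul, Matrix.mul_add,
    Matrix.single_mul_single_of_ne, hjk, hli]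
  abel

lemma Mst' {i j k : Fin 3} (hij : i ≠ j) (hjk : j ≠ k) (hik : i ≠ k) (a b : ℤ) :
    transvection i j a * transvection j k b
      = transvection j k b * transvection i j a * transvection i k (a*b) := by
  simp [transvection, Matrix.add_mul, Matrix.mul_add,
    Matrix.single_mul_single_of_ne, hij.symm, hjk.symm, hik.symm,
    Matrix.single_mul_single_same]
  abel

def Egen (i j : Fin 3) (h : i ≠ j) (c : ℤ) : Matrix.SpecialLinearGroup (Fin 3) ℤ :=
  ⟨Matrix.transvection i j c, Matrix.det_transvection_of_ne i j h c⟩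

lemma Egen_mul (i j : Fin 3) (h : i ≠ j) (a b : ℤ) :
    Egen i j h a * Egen i j h b = Egen i j h (a + b) := by
  apply Subtype.ext
  exact Matrix.transvection_mul_transvection_same i j h a b

lemma Egen_pow (i j : Fin 3) (h : i ≠ j) (c : ℤ) (n : ℕ) :
    (Egen i j h c)^n = Egen i j h (n * c) := by
  induction n with
  | zero =>
    apply Subtype.ext
    exact (pow_zero _).trans (by simp [Egen])
  | succ n ih =>
    rw [pow_succ, ih, Egen_mul]
    congr 1
    push_cast
    ring

lemma Egen_comm {i j k l : Fin 3} (hij : i ≠ j) (hkl : k ≠ l) (hjk : j ≠ k)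
    (hli : l ≠ i) (a b : ℤ) :
    Egen i j hij a * Egen k l hkl b = Egen k l hkl b * Egen i j hij a := by
  apply Subtype.ext
  exact Mcomm' hjk hli a b

lemma Egen_st {i j k : Fin 3} (hij : i ≠ j) (hjk : j ≠ k) (hik : i ≠ k) (a b : ℤ) :
    Egen i j hij a * Egen j k hjk b
      = Egen j k hjk b * Egen i j hij a * Egen i k hik (a*b) := by
  apply Subtype.ext
  exact Mst' hij hjk hik a b

lemma Egen_ne_one (i j : Fin 3) (h : i ≠ j) (c : ℤ) (hc : c ≠ 0) :
    Egen i j h c ≠ 1 := by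
  intro he
  have h2 : (Egen i j h c).val = (1 : Matrix.SpecialLinearGroup (Fin 3) ℤ).val :=
    congrArg Subtype.val he
  have h3 := congrFun (congrFun h2 i) j
  simp [Egen, Matrix.transvection, Matrix.SpecialLinearGroup.coe_one,
    Matrix.one_apply_ne h, hc] at h3

section Main

abbrev SL3 := Matrix.SpecialLinearGroup (Fin 3) ℤ

lemma liftComm {H : Subgroup SL3} (x y : H)
    (h : (x : SL3) * (y : SL3) = (y : SL3) * (x : SL3)) : Commute x y :=
  Subtype.ext (by rw [Subgroup.coe_mul, Subgroup.coe_mul]; exact h)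

lemma liftRel {H : Subgroup SL3} (x y z : H) (k : ℤ)
    (h : (x : SL3) * (y : SL3) = (y : SL3) * (x : SL3) * (z : SL3)^k) :
    x * y = y * x * z^k :=
  Subtype.ext (by
    rw [Subgroup.coe_mul, Subgroup.coe_mul, Subgroup.coe_mul, SubgroupClass.coe_zpow]
    exact h)

lemma EgenRel (i j k : Fin 3) (hij : i ≠ j) (hjk : j ≠ k) (hik : i ≠ k) (N : ℕ) :
    Egen i j hij (N:ℤ) * Egen j k hjk (N:ℤ)
      = Egen j k hjk (N:ℤ) * Egen i j hij (N:ℤ) * (Egen i k hik (N:ℤ))^((N:ℕ):ℤ) := by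
  rw [zpow_natCast, Egen_pow, Egen_st hij hjk hik]

/-- No finite-index subgroup of `SL₃(ℤ)` is left-orderable: a finite-index subgroup
`H` of `SL₃(ℤ)` admits no strict total order invariant under left multiplication. -/
theorem finiteIndex_subgroup_SL3_not_leftOrderable
    (H : Subgroup (Matrix.SpecialLinearGroup (Fin 3) ℤ)) (hH : H.FiniteIndex) :
    ¬ ∃ r : H → H → Prop, IsStrictTotalOrder H r ∧
        ∀ g h h' : H, r h h' → r (g * h) (g * h') := by
  rintro ⟨r, hsto, hinvr⟩
  haveI := hsto
  have htri : ∀ x y : H, r x y ∨ x = y ∨ r y x := fun x y => trichotomous x y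
  have hirr : ∀ x : H, ¬ r x x := fun x => irrefl x
  have htr : ∀ {x y z : H}, r x y → r y z → r x z := fun h1 h2 => _root_.trans h1 h2
  have hidx : H.index ≠ 0 := hH.index_ne_zero
  have hmem : ∀ (i j : Fin 3) (hij : i ≠ j), ∃ n : ℕ, 0 < n ∧ Egen i j hij (n:ℤ) ∈ H := by
    intro i j hij
    obtain ⟨n, hn, _, hm⟩ := Subgroup.exists_pow_mem_of_index_ne_zero hidx (Egen i j hij 1)
    rw [Egen_pow, mul_one] at hm
    exact ⟨n, hn, hm⟩
  obtain ⟨n01, hp01, hm01⟩ := hmem 0 1 (by decide)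
  obtain ⟨n02, hp02, hm02⟩ := hmem 0 2 (by decide)
  obtain ⟨n12, hp12, hm12⟩ := hmem 1 2 (by decide)
  obtain ⟨n10, hp10, hm10⟩ := hmem 1 0 (by decide)
  obtain ⟨n20, hp20, hm20⟩ := hmem 2 0 (by decide)
  obtain ⟨n21, hp21, hm21⟩ := hmem 2 1 (by decide)
  set N : ℕ := n01 * n02 * n12 * n10 * n20 * n21 with hN
  have hNpos : 0 < N := by positivity
  have hNne : (N : ℤ) ≠ 0 := Int.natCast_ne_zero.mpr hNpos.ne'
  have hstep : ∀ (i j : Fin 3) (hij : i ≠ j) (n : ℕ), Egen i j hij (n:ℤ) ∈ H →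
      n ∣ N → Egen i j hij (N:ℤ) ∈ H := by
    intro i j hij n hm hd
    obtain ⟨m, hdm⟩ := hd
    have hpm := pow_mem hm m
    rw [Egen_pow] at hpm
    have he : ((m:ℤ) * (n:ℤ)) = ((N : ℕ) : ℤ) := by rw [hdm]; push_cast; ring
    rwa [he] at hpm
  have hM01 : Egen 0 1 (by decide) (N:ℤ) ∈ H :=
    hstep _ _ _ _ hm01 ⟨n02*n12*n10*n20*n21, by rw [hN]; ring⟩
  have hM02 : Egen 0 2 (by decide) (N:ℤ) ∈ H :=
    hstep _ _ _ _ hm02 ⟨n01*n12*n10*n20*n21, by rw [hN]; ring⟩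
  have hM12 : Egen 1 2 (by decide) (N:ℤ) ∈ H :=
    hstep _ _ _ _ hm12 ⟨n01*n02*n10*n20*n21, by rw [hN]; ring⟩
  have hM10 : Egen 1 0 (by decide) (N:ℤ) ∈ H :=
    hstep _ _ _ _ hm10 ⟨n01*n02*n12*n20*n21, by rw [hN]; ring⟩
  have hM20 : Egen 2 0 (by decide) (N:ℤ) ∈ H :=
    hstep _ _ _ _ hm20 ⟨n01*n02*n12*n10*n21, by rw [hN]; ring⟩
  have hM21 : Egen 2 1 (by decide) (N:ℤ) ∈ H :=
    hstep _ _ _ _ hm21 ⟨n01*n02*n12*n10*n20, by rw [hN]; ring⟩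
  set u : Fin 6 → H :=
    ![⟨Egen 0 1 (by decide) (N:ℤ), hM01⟩,
      ⟨Egen 0 2 (by decide) (N:ℤ), hM02⟩,
      ⟨Egen 1 2 (by decide) (N:ℤ), hM12⟩,
      ⟨Egen 1 0 (by decide) (N:ℤ), hM10⟩,
      ⟨Egen 2 0 (by decide) (N:ℤ), hM20⟩,
      ⟨Egen 2 1 (by decide) (N:ℤ), hM21⟩] with hu
  apply hexagon r htri hirr @htr (fun g x y h => hinvr g x y h) u
  · -- hne
    intro i
    fin_cases i
    · exact fun he => Egen_ne_one 0 1 (by decide) _ hNne (congrArg Subtype.val he)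
    · exact fun he => Egen_ne_one 0 2 (by decide) _ hNne (congrArg Subtype.val he)
    · exact fun he => Egen_ne_one 1 2 (by decide) _ hNne (congrArg Subtype.val he)
    · exact fun he => Egen_ne_one 1 0 (by decide) _ hNne (congrArg Subtype.val he)
    · exact fun he => Egen_ne_one 2 0 (by decide) _ hNne (congrArg Subtype.val he)
    · exact fun he => Egen_ne_one 2 1 (by decide) _ hNne (congrArg Subtype.val he)
  · -- hcomm
    intro i
    fin_cases i
    · exact liftComm _ _ (Egen_comm (by decide) (by decide) (by decide) (by decide) _ _)
    · exact liftComm _ _ (Egen_comm (by decide) (by decide) (by decide) (by decide) _ _)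
    · exact liftComm _ _ (Egen_comm (by decide) (by decide) (by decide) (by decide) _ _)
    · exact liftComm _ _ (Egen_comm (by decide) (by decide) (by decide) (by decide) _ _)
    · exact liftComm _ _ (Egen_comm (by decide) (by decide) (by decide) (by decide) _ _)
    · exact liftComm _ _ (Egen_comm (by decide) (by decide) (by decide) (by decide) _ _)
  · -- hrel
    intro i
    fin_cases i
    · exact ⟨(N:ℤ), hNne,
        liftRel _ _ _ _ (EgenRel 0 1 2 (by decide) (by decide) (by decide) N)⟩
    · refine ⟨-(N:ℤ), by simpa using hNne, ?_⟩
      exact flip0 (liftRel _ _ _ _ (EgenRel 1 0 2 (by decide) (by decide) (by decide) N))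
    · exact ⟨(N:ℤ), hNne,
        liftRel _ _ _ _ (EgenRel 1 2 0 (by decide) (by decide) (by decide) N)⟩
    · refine ⟨-(N:ℤ), by simpa using hNne, ?_⟩
      exact flip0 (liftRel _ _ _ _ (EgenRel 2 1 0 (by decide) (by decide) (by decide) N))
    · exact ⟨(N:ℤ), hNne,
        liftRel _ _ _ _ (EgenRel 2 0 1 (by decide) (by decide) (by decide) N)⟩
    · refine ⟨-(N:ℤ), by simpa using hNne, ?_⟩
      exact flip0 (liftRel _ _ _ _ (EgenRel 0 2 1 (by decide) (by decide) (by decide) N))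

end Main
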